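/- arXiv:0706.2636 — 2 statements merged into one kernel-verified Lean document; each statement's English description precedes it below -/
import Mathlib

section
/- For H ∈ (1/2,1), n ∈ ℕ, Δ = 1/n, and any j, the diagonal integral ∫_{t_j}^{t_{j+1}} ∫_{t_j}^{t_{j+1}} θ(s₁,s₂) ds₂ ds₁ = [1/(2H+1) − 1/((2H+2)(2H+1)) − 1/4] · n^{−2H−2}, where θ(s₁,s₂) = −(1/4)Δ^{2H} + (1/4)[(s₂−t_j)^{2H} + (t_{j+1}−s₂)^{2H} + (s₁−t_j)^{2H} + (t_{j+1}−s₁)^{2H}] − (1/2)|s₁−s₂|^{2H}. -/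
open intervalIntegral

lemma aux_cont_rpow {r : ℝ} (hr : 0 ≤ r) : Continuous fun x : ℝ => x ^ r := by
  rw [continuous_iff_continuousAt]
  exact fun x => Real.continuousAt_rpow_const x r (Or.inr hr)

lemma aux_intA (a b r : ℝ) (hr : -1 < r) :
    ∫ s in a..b, (s - a) ^ r = (b - a) ^ (r + 1) / (r + 1) := by
  rw [intervalIntegral.integral_comp_sub_right (fun x => x ^ r) a, sub_self,
    integral_rpow (Or.inl hr), Real.zero_rpow (by linarith)]
  ring

lemma aux_intB (a b r : ℝ) (hr : -1 < r) :
    ∫ s in a..b, (b - s) ^ r = (b - a) ^ (r + 1) / (r + 1) := by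
  rw [intervalIntegral.integral_comp_sub_left (fun x => x ^ r) b, sub_self,
    integral_rpow (Or.inl hr), Real.zero_rpow (by linarith)]
  ring

lemma aux_intC (a b c r : ℝ) (hr : 0 ≤ r) (hac : a ≤ c) (hcb : c ≤ b) :
    ∫ s in a..b, |c - s| ^ r = ((c - a) ^ (r + 1) + (b - c) ^ (r + 1)) / (r + 1) := by
  have hcont : Continuous fun s : ℝ => |c - s| ^ r :=
    (aux_cont_rpow hr).comp (continuous_const.sub continuous_id).abs
  rw [← intervalIntegral.integral_add_adjacent_intervals
    (hcont.intervalIntegrable a c) (hcont.intervalIntegrable c b)]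
  have e1 : ∫ s in a..c, |c - s| ^ r = ∫ s in a..c, (c - s) ^ r := by
    apply intervalIntegral.integral_congr
    intro s hs
    rw [Set.uIcc_of_le hac] at hs
    show |c - s| ^ r = (c - s) ^ r
    rw [abs_of_nonneg (by linarith [hs.2] : (0:ℝ) ≤ c - s)]
  have e2 : ∫ s in c..b, |c - s| ^ r = ∫ s in c..b, (s - c) ^ r := by
    apply intervalIntegral.integral_congr
    intro s hs
    rw [Set.uIcc_of_le hcb] at hs
    show |c - s| ^ r = (s - c) ^ r
    rw [abs_of_nonpos (by linarith [hs.1] : c - s ≤ 0), neg_sub]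
  rw [e1, e2, aux_intB a c r (by linarith), aux_intA c b r (by linarith)]
  ring

lemma aux_double (a b r : ℝ) (hab : a < b) (hr : 1 < r) :
    ∫ s₁ in a..b, ∫ s₂ in a..b,
        (-(1/4) * (b - a) ^ r
          + (1/4) * ((s₂ - a) ^ r + (b - s₂) ^ r + (s₁ - a) ^ r + (b - s₁) ^ r)
          - (1/2) * |s₁ - s₂| ^ r)
      = (1/(r + 1) - 1/((r + 2) * (r + 1)) - 1/4) * (b - a) ^ (r + 2) := by
  have hr0 : (0:ℝ) ≤ r := by linarith
  have hr1 : (-1:ℝ) < r := by linarith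
  have hr1' : (-1:ℝ) < r + 1 := by linarith
  have hrp1 : (r + 1) ≠ 0 := by linarith
  have hrp2 : (r + 2) ≠ 0 := by linarith
  have hcA : Continuous fun s : ℝ => (s - a) ^ r :=
    (aux_cont_rpow hr0).comp (continuous_id.sub continuous_const)
  have hcB : Continuous fun s : ℝ => (b - s) ^ r :=
    (aux_cont_rpow hr0).comp (continuous_const.sub continuous_id)
  have hcA1 : Continuous fun s : ℝ => (s - a) ^ (r + 1) :=
    (aux_cont_rpow (by linarith : (0:ℝ) ≤ r + 1)).comp (continuous_id.sub continuous_const)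
  have hcB1 : Continuous fun s : ℝ => (b - s) ^ (r + 1) :=
    (aux_cont_rpow (by linarith : (0:ℝ) ≤ r + 1)).comp (continuous_const.sub continuous_id)
  -- inner integral evaluation
  have inner : ∀ s₁ ∈ Set.Icc a b,
      (∫ s₂ in a..b,
        (-(1/4) * (b - a) ^ r
          + (1/4) * ((s₂ - a) ^ r + (b - s₂) ^ r + (s₁ - a) ^ r + (b - s₁) ^ r)
          - (1/2) * |s₁ - s₂| ^ r))
      = (-(1/4) * (b - a) ^ r + (1/4) * ((s₁ - a) ^ r + (b - s₁) ^ r)) * (b - a)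
        + (1/2) * ((b - a) ^ (r + 1) / (r + 1))
        - (1/2) * (((s₁ - a) ^ (r + 1) + (b - s₁) ^ (r + 1)) / (r + 1)) := by
    intro s₁ hs₁
    have hcC : Continuous fun s : ℝ => |s₁ - s| ^ r :=
      (aux_cont_rpow hr0).comp (continuous_const.sub continuous_id).abs
    have step : (∫ s₂ in a..b,
        (-(1/4) * (b - a) ^ r
          + (1/4) * ((s₂ - a) ^ r + (b - s₂) ^ r + (s₁ - a) ^ r + (b - s₁) ^ r)
          - (1/2) * |s₁ - s₂| ^ r))
      = ∫ s₂ in a..b,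
        ((-(1/4) * (b - a) ^ r + (1/4) * ((s₁ - a) ^ r + (b - s₁) ^ r))
          + ((1/4) * (s₂ - a) ^ r + ((1/4) * (b - s₂) ^ r + -((1/2) * |s₁ - s₂| ^ r)))) := by
      apply intervalIntegral.integral_congr
      intro s _
      ring
    rw [step]
    rw [intervalIntegral.integral_add (intervalIntegrable_const)
      (((continuous_const.fun_mul hcA).fun_add ((continuous_const.fun_mul hcB).fun_add (continuous_const.fun_mul hcC).fun_neg)).intervalIntegrable a b)]
    rw [intervalIntegral.integral_add ((continuous_const.fun_mul hcA).intervalIntegrable a b)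
      (((continuous_const.fun_mul hcB).fun_add (continuous_const.fun_mul hcC).fun_neg).intervalIntegrable a b)]
    rw [intervalIntegral.integral_add ((continuous_const.fun_mul hcB).intervalIntegrable a b)
      ((continuous_const.fun_mul hcC).fun_neg.intervalIntegrable a b)]
    rw [intervalIntegral.integral_neg, intervalIntegral.integral_const_mul,
      intervalIntegral.integral_const_mul, intervalIntegral.integral_const_mul,
      intervalIntegral.integral_const, aux_intA a b r hr1, aux_intB a b r hr1,
      aux_intC a b s₁ r hr0 hs₁.1 hs₁.2, smul_eq_mul]
    ring
  have outer_congr : (∫ s₁ in a..b, ∫ s₂ in a..b,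
        (-(1/4) * (b - a) ^ r
          + (1/4) * ((s₂ - a) ^ r + (b - s₂) ^ r + (s₁ - a) ^ r + (b - s₁) ^ r)
          - (1/2) * |s₁ - s₂| ^ r))
      = ∫ s₁ in a..b,
        ((-(1/4) * (b - a) ^ r * (b - a) + (1/2) * ((b - a) ^ (r + 1) / (r + 1)))
          + (((b - a)/4) * (s₁ - a) ^ r + ((((b - a)/4) * (b - s₁) ^ r)
            + (-((1/(2*(r+1))) * (s₁ - a) ^ (r + 1)) + -((1/(2*(r+1))) * (b - s₁) ^ (r + 1)))))) := by
    apply intervalIntegral.integral_congr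
    intro s₁ hs₁
    rw [Set.uIcc_of_le hab.le] at hs₁
    simp only
    rw [inner s₁ hs₁]
    field_simp
    ring
  rw [outer_congr]
  rw [intervalIntegral.integral_add (intervalIntegrable_const)
    (((continuous_const.fun_mul hcA).fun_add ((continuous_const.fun_mul hcB).fun_add
      ((continuous_const.fun_mul hcA1).fun_neg.fun_add (continuous_const.fun_mul hcB1).fun_neg))).intervalIntegrable a b)]
  rw [intervalIntegral.integral_add ((continuous_const.fun_mul hcA).intervalIntegrable a b)
    (((continuous_const.fun_mul hcB).fun_add ((continuous_const.fun_mul hcA1).fun_neg.fun_add (continuous_const.fun_mul hcB1).fun_neg)).intervalIntegrable a b)]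
  rw [intervalIntegral.integral_add ((continuous_const.fun_mul hcB).intervalIntegrable a b)
    (((continuous_const.fun_mul hcA1).fun_neg.fun_add (continuous_const.fun_mul hcB1).fun_neg).intervalIntegrable a b)]
  rw [intervalIntegral.integral_add ((continuous_const.fun_mul hcA1).fun_neg.intervalIntegrable a b)
    ((continuous_const.fun_mul hcB1).fun_neg.intervalIntegrable a b)]
  rw [intervalIntegral.integral_neg, intervalIntegral.integral_neg,
    intervalIntegral.integral_const_mul, intervalIntegral.integral_const_mul,
    intervalIntegral.integral_const_mul, intervalIntegral.integral_const_mul,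
    intervalIntegral.integral_const, smul_eq_mul,
    aux_intA a b r hr1, aux_intB a b r hr1, aux_intA a b (r+1) hr1', aux_intB a b (r+1) hr1']
  have hne : b - a ≠ 0 := by linarith
  have e1 : (b - a) ^ (r + 1) = (b - a) ^ r * (b - a) := Real.rpow_add_one hne r
  have e2 : (b - a) ^ (r + 1 + 1) = (b - a) ^ (r + 1) * (b - a) := Real.rpow_add_one hne (r+1)
  have e3 : (b - a) ^ (r + 2) = (b - a) ^ r * (b - a) * (b - a) := by
    rw [show r + 2 = r + 1 + 1 by ring, e2, e1]
  rw [e3, e2, e1]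
  field_simp
  ring

/-- Explicit evaluation of the diagonal double integral of `θ(s₁,s₂)`. -/
theorem stmt_14 (H : ℝ) (hH : H ∈ Set.Ioo (1/2 : ℝ) 1) (n j : ℕ) (hn : 0 < n) :
    ∫ s₁ in ((j:ℝ)/n)..(((j:ℝ)+1)/n), ∫ s₂ in ((j:ℝ)/n)..(((j:ℝ)+1)/n),
        (-(1/4) * ((1:ℝ)/n) ^ (2*H)
          + (1/4) * ((s₂ - (j:ℝ)/n) ^ (2*H) + ((((j:ℝ)+1)/n) - s₂) ^ (2*H)
              + (s₁ - (j:ℝ)/n) ^ (2*H) + ((((j:ℝ)+1)/n) - s₁) ^ (2*H))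
          - (1/2) * |s₁ - s₂| ^ (2*H))
      = (1/(2*H + 1) - 1/((2*H + 2) * (2*H + 1)) - 1/4) * (n:ℝ) ^ (-(2*H) - 2) := by
  have hn' : (0:ℝ) < n := by exact_mod_cast hn
  have h := aux_double ((j:ℝ)/n) (((j:ℝ)+1)/n) (2*H)
    ((div_lt_div_iff_of_pos_right hn').mpr (by linarith))
    (by have := hH.1; linarith)
  have hd : ((j:ℝ)+1)/n - (j:ℝ)/n = (1:ℝ)/n := by ring
  rw [hd] at h
  rw [h]
  congr 1
  rw [one_div, Real.inv_rpow hn'.le, ← Real.rpow_neg hn'.le]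
  congr 1
  ring
end

section
/- For H ∈ (1/2, 1) and r ∈ ℕ, define C₀(r) = −(1/4)(r+1)^{2H} + (1/4)r^{2H} − Σ_{k=1}^r k^{2H} + [( r+1)^{2H+1} + r^{2H+1}]/(2H+1) + [r^{2H+2} − (r+1)^{2H+2}]/((2H+1)(2H+2)). Then lim_{r→∞} C₀(r) = −ζ(−2H), where ζ is the Riemann zeta function. -/
open Filter Complex

noncomputable section
namespace Stmt15

def q1 (t : ℝ) : ℂ := ((t - 1/2 : ℝ) : ℂ)
def q2 (t : ℝ) : ℂ := (((t^2 - t + 1/6)/2 : ℝ) : ℂ)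
def q3 (t : ℝ) : ℂ := (((2*t^3 - 3*t^2 + t)/12 : ℝ) : ℂ)

def tau (z : ℂ) (k : ℕ) : ℂ :=
  ∫ t in (0:ℝ)..1, q3 t * ((-z)*(-z-1)*(-z-2) * (((k:ℝ) + t : ℝ) : ℂ) ^ (-z-3))

lemma hasDerivAt_q1 (t : ℝ) : HasDerivAt q1 1 t := by
  have h : HasDerivAt (fun t : ℝ => t - 1/2) 1 t := (hasDerivAt_id t).sub_const _
  convert h.ofReal_comp using 1
  all_goals first | rfl | simp

lemma hasDerivAt_q2 (t : ℝ) : HasDerivAt q2 (q1 t) t := by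
  have h : HasDerivAt (fun t : ℝ => (t^2 - t + 1/6)/2) (t - 1/2) t := by
    have := (((hasDerivAt_pow 2 t).sub (hasDerivAt_id t)).add_const (1/6)).div_const 2
    convert this using 1
    all_goals first | rfl | (push_cast; ring)
  exact h.ofReal_comp

lemma hasDerivAt_q3 (t : ℝ) : HasDerivAt q3 (q2 t) t := by
  have h : HasDerivAt (fun t : ℝ => (2*t^3 - 3*t^2 + t)/12) ((t^2 - t + 1/6)/2) t := by
    have := ((((hasDerivAt_pow 3 t).const_mul 2).sub ((hasDerivAt_pow 2 t).const_mul 3)).add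
      (hasDerivAt_id t)).div_const 12
    convert this using 1
    all_goals first | rfl | (push_cast; ring)
  exact h.ofReal_comp

lemma hasDerivAt_cpow_shift (c : ℝ) (w : ℂ) {t : ℝ} (h : 0 < c + t) :
    HasDerivAt (fun t : ℝ => ((c + t : ℝ) : ℂ) ^ w) (w * ((c + t : ℝ) : ℂ) ^ (w - 1)) t := by
  have h0 : ((c + t : ℝ) : ℂ) ∈ Complex.slitPlane := Complex.ofReal_mem_slitPlane.mpr h
  have h1 : HasDerivAt (fun y : ℝ => ((y:ℂ)) ^ w) (w * ((c+t:ℝ):ℂ)^(w-1)) (c+t) :=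
    (Complex.hasStrictDerivAt_cpow_const h0).hasDerivAt.comp_ofReal
  have hf : HasDerivAt (fun x : ℝ => c + x) 1 t := by
    simpa using (hasDerivAt_id t).const_add c
  simpa only [Function.comp_def, one_smul] using h1.scomp t hf

lemma per_interval {z : ℂ} (hz : z ≠ 1) (k : ℕ) (hk : 1 ≤ k) :
    tau z k = ((k:ℂ) ^ (-z) + ((k:ℂ)+1) ^ (-z)) / 2
      - (1/12) * ((-z) * ((k:ℂ)+1) ^ (-z-1) - (-z) * (k:ℂ) ^ (-z-1))
      - (((k:ℂ)+1) ^ (1-z) - (k:ℂ) ^ (1-z)) / (1-z) := by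
  have h1z : (1:ℂ) - z ≠ 0 := sub_ne_zero.mpr (by simpa using hz.symm)
  set b : ℝ → ℂ := fun t => (((k:ℝ) + t : ℝ) : ℂ) with hb
  set W : ℝ → ℂ := fun t => q3 t * ((-z)*(-z-1) * b t ^ (-z-2))
      - q2 t * ((-z) * b t ^ (-z-1)) + q1 t * b t ^ (-z) - b t ^ (1-z) / (1-z) with hWdef
  have hpos : ∀ t ∈ Set.uIcc (0:ℝ) 1, 0 < (k:ℝ) + t := by
    intro t ht
    rw [Set.uIcc_of_le (by norm_num : (0:ℝ) ≤ 1)] at ht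
    have : (1:ℝ) ≤ (k:ℝ) := by exact_mod_cast hk
    nlinarith [ht.1]
  have hW : ∀ t ∈ Set.uIcc (0:ℝ) 1,
      HasDerivAt W (q3 t * ((-z)*(-z-1)*(-z-2) * b t ^ (-z-3))) t := by
    intro t ht
    have hp := hpos t ht
    have h3 : HasDerivAt (fun t => b t ^ (-z-2)) ((-z-2) * b t ^ (-z-3)) t := by
      simpa only [show -z-2-1 = -z-3 from by ring] using hasDerivAt_cpow_shift (k:ℝ) (-z-2) hp
    have h2 : HasDerivAt (fun t => b t ^ (-z-1)) ((-z-1) * b t ^ (-z-2)) t := by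
      simpa only [show -z-1-1 = -z-2 from by ring] using hasDerivAt_cpow_shift (k:ℝ) (-z-1) hp
    have h1 : HasDerivAt (fun t => b t ^ (-z)) ((-z) * b t ^ (-z-1)) t := by
      simpa only [] using hasDerivAt_cpow_shift (k:ℝ) (-z) hp
    have h0 : HasDerivAt (fun t => b t ^ (1-z)) ((1-z) * b t ^ (-z)) t := by
      simpa only [show 1-z-1 = -z from by ring] using hasDerivAt_cpow_shift (k:ℝ) (1-z) hp
    have hT1 := (hasDerivAt_q3 t).mul (h3.const_mul ((-z)*(-z-1)))
    have hT2 := (hasDerivAt_q2 t).mul (h2.const_mul (-z))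
    have hT3 := (hasDerivAt_q1 t).mul h1
    have hT4 := h0.div_const (1-z)
    have := ((hT1.sub hT2).add hT3).sub hT4
    convert this using 1
    all_goals first | rfl | (field_simp; ring)
  have hint : IntervalIntegrable
      (fun t => q3 t * ((-z)*(-z-1)*(-z-2) * b t ^ (-z-3))) MeasureTheory.volume 0 1 := by
    apply ContinuousOn.intervalIntegrable
    apply ContinuousOn.mul
    · exact (Complex.continuous_ofReal.comp (by fun_prop)).continuousOn
    · apply ContinuousOn.mul continuousOn_const
      intro t ht
      exact (ContinuousAt.cpow ((Complex.continuous_ofReal.comp (by fun_prop)).continuousAt)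
        continuousAt_const (by simpa using Complex.ofReal_mem_slitPlane.mpr (hpos t ht))).continuousWithinAt
  have key := intervalIntegral.integral_eq_sub_of_hasDerivAt hW hint
  have htau : tau z k = W 1 - W 0 := key
  have hb1 : b 1 = (k:ℂ) + 1 := by simp [hb]
  have hb0 : b 0 = (k:ℂ) := by simp [hb]
  rw [htau]
  simp only [hWdef, hb1, hb0]
  norm_num [q1, q2, q3]
  field_simp
  ring

lemma per_interval' (z : ℂ) (k : ℕ) (hk : 1 ≤ k) :
    (1-z) * tau z k = (1-z) * (((k:ℂ) ^ (-z) + ((k:ℂ)+1) ^ (-z)) / 2)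
      - (1-z) * ((1/12) * ((-z) * ((k:ℂ)+1) ^ (-z-1) - (-z) * (k:ℂ) ^ (-z-1)))
      - (((k:ℂ)+1) ^ (1-z) - (k:ℂ) ^ (1-z)) := by
  by_cases hz : z = 1
  · subst hz
    norm_num
  · have h1z : (1:ℂ) - z ≠ 0 := sub_ne_zero.mpr (by simpa using (Ne.symm hz))
    rw [per_interval hz k hk]
    field_simp

/-- partial-sum remainder function -/
def gt' (r : ℕ) (z : ℂ) : ℂ :=
  (1-z) * (∑ k ∈ Finset.Icc 1 r, (k:ℂ) ^ (-z)) - (1-z) * (1 + (r:ℂ) ^ (-z)) / 2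
    - ((r:ℂ) ^ (1-z) - 1) - (1-z) * (-z/12) * ((r:ℂ) ^ (-z-1) - 1)

lemma EM (z : ℂ) (n : ℕ) :
    gt' (n+1) z = (1-z) * ∑ j ∈ Finset.range n, tau z (j+1) := by
  induction n with
  | zero =>
      simp only [gt', Finset.range_zero, Finset.sum_empty, mul_zero]
      norm_num [Finset.Icc_self]
  | succ n ih =>
      have hstep := per_interval' z (n+1) (by omega)
      have hsum : ∑ k ∈ Finset.Icc 1 (n+1+1), (k:ℂ) ^ (-z)
          = ∑ k ∈ Finset.Icc 1 (n+1), (k:ℂ) ^ (-z) + ((n+1+1 : ℕ):ℂ) ^ (-z) :=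
        Finset.sum_Icc_succ_top (by omega) _
      have hr : ∑ j ∈ Finset.range (n+1), tau z (j+1)
          = ∑ j ∈ Finset.range n, tau z (j+1) + tau z (n+1) := Finset.sum_range_succ _ _
      simp only [gt'] at ih ⊢
      rw [hsum, hr]
      push_cast at ih hstep ⊢
      linear_combination ih - hstep

lemma tau_bound {σ M : ℝ} (hσ3 : -3 ≤ σ) {z : ℂ} (hre : σ ≤ z.re) (hn : ‖z‖ ≤ M) (j : ℕ) :
    ‖(1-z) * tau z (j+1)‖ ≤ (1+M)*((M+1)*(M+2)*(M+3)) * ((j:ℝ)+1) ^ (-σ-3) := by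
  have hM0 : 0 ≤ M := le_trans (norm_nonneg z) hn
  have hj1 : (1:ℝ) ≤ (j:ℝ)+1 := by
    have : (0:ℝ) ≤ (j:ℝ) := Nat.cast_nonneg j
    linarith
  have hbase : (0:ℝ) < ((j:ℝ)+1) ^ (-σ-3) := Real.rpow_pos_of_pos (by positivity) _
  rw [norm_mul]
  have h1z : ‖(1:ℂ)-z‖ ≤ 1+M := le_trans (norm_sub_le _ _) (by simpa using hn)
  have htau : ‖tau z (j+1)‖ ≤ ((M+1)*(M+2)*(M+3) * ((j:ℝ)+1) ^ (-σ-3)) * |1 - 0| := by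
    apply intervalIntegral.norm_integral_le_of_norm_le_const
    intro t ht
    rw [Set.uIoc_of_le (by norm_num : (0:ℝ) ≤ 1)] at ht
    have ht0 : 0 < t := ht.1
    have ht1 : t ≤ 1 := ht.2
    have hq3 : ‖q3 t‖ ≤ 1 := by
      rw [q3, Complex.norm_real, Real.norm_eq_abs, abs_le]
      constructor <;> nlinarith
    have hw : ‖(-z)*(-z-1)*(-z-2)‖ ≤ (M+1)*(M+2)*(M+3) := by
      rw [norm_mul, norm_mul]
      have e1 : ‖-z‖ ≤ M+1 := by simpa using le_trans hn (by linarith)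
      have e2 : ‖-z-1‖ ≤ M+2 := le_trans (norm_sub_le _ _) (by simpa using (by linarith [hn] : ‖z‖ + 1 ≤ M + 2))
      have e3 : ‖-z-2‖ ≤ M+3 := by
        refine le_trans (norm_sub_le _ _) ?_
        simp only [norm_neg]
        have : ‖(2:ℂ)‖ = 2 := by norm_num
        rw [this]; linarith
      have h2 : (0:ℝ) ≤ ‖-z-1‖ := norm_nonneg _
      have h3 : (0:ℝ) ≤ ‖-z-2‖ := norm_nonneg _
      have p12 : ‖-z‖*‖-z-1‖ ≤ (M+1)*(M+2) := mul_le_mul e1 e2 h2 (by linarith)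
      have := mul_le_mul p12 e3 h3 (by positivity)
      linarith
    have hxpos : (0:ℝ) < ((j+1:ℕ):ℝ) + t := by positivity
    have hp : ‖(((((j+1:ℕ):ℝ)) + t : ℝ) : ℂ) ^ (-z-3)‖ ≤ ((j:ℝ)+1) ^ (-σ-3) := by
      rw [Complex.norm_cpow_eq_rpow_re_of_pos hxpos]
      have hre3 : (-z-3).re ≤ -σ-3 := by
        have : (-z-3).re = -z.re-3 := by simp
        rw [this]
        linarith
      have hx1 : (1:ℝ) ≤ ((j+1:ℕ):ℝ) + t := by
        push_cast
        linarith
      calc (((j+1:ℕ):ℝ) + t) ^ (-z-3).re ≤ (((j+1:ℕ):ℝ) + t) ^ (-σ-3) :=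
            Real.rpow_le_rpow_of_exponent_le hx1 hre3
        _ ≤ ((j:ℝ)+1) ^ (-σ-3) := by
            apply Real.rpow_le_rpow_of_nonpos (by positivity) (by push_cast; linarith)
            linarith
    calc ‖q3 t * ((-z)*(-z-1)*(-z-2) * ((((j+1:ℕ):ℝ) + t : ℝ) : ℂ) ^ (-z-3))‖
        = ‖q3 t‖ * (‖(-z)*(-z-1)*(-z-2)‖ * ‖(((((j+1:ℕ):ℝ)) + t : ℝ) : ℂ) ^ (-z-3)‖) := by
          rw [norm_mul, norm_mul]
      _ ≤ 1 * ((M+1)*(M+2)*(M+3) * (((j:ℝ)+1) ^ (-σ-3))) := by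
          apply mul_le_mul hq3 ?_ (by positivity) (by norm_num)
          exact mul_le_mul hw hp (norm_nonneg _) (by positivity)
      _ = (M+1)*(M+2)*(M+3) * ((j:ℝ)+1) ^ (-σ-3) := by ring
  calc ‖(1:ℂ)-z‖ * ‖tau z (j+1)‖ ≤ (1+M) * (((M+1)*(M+2)*(M+3) * ((j:ℝ)+1) ^ (-σ-3)) * |1-0|) := by
        apply mul_le_mul h1z htau (norm_nonneg _) (by linarith)
    _ = (1+M)*((M+1)*(M+2)*(M+3)) * ((j:ℝ)+1) ^ (-σ-3) := by
        norm_num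
        ring

def FF : ℂ → ℂ := fun z => ∑' j : ℕ, (1-z) * tau z (j+1)

def Wset : Set ℂ := {z : ℂ | -2 < z.re}

lemma isOpen_Wset : IsOpen Wset := isOpen_lt continuous_const Complex.continuous_re

lemma tlu : TendstoLocallyUniformlyOn gt' FF atTop Wset := by
  rw [tendstoLocallyUniformlyOn_iff_forall_isCompact isOpen_Wset]
  intro K hKsub hK
  rcases K.eq_empty_or_nonempty with rfl | hne
  · exact tendstoUniformlyOn_empty
  obtain ⟨M, hM⟩ := hK.exists_bound_of_continuousOn continuousOn_id
  obtain ⟨z₀, hz₀K, hz₀min⟩ := hK.exists_isMinOn hne Complex.continuous_re.continuousOn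
  set σ := z₀.re with hσdef
  have hσ : -2 < σ := hKsub hz₀K
  have hsum0 : Summable (fun j : ℕ => ((j:ℝ)) ^ (-σ-3)) :=
    Real.summable_nat_rpow.2 (by linarith)
  have hsum1 : Summable (fun j : ℕ => ((j:ℝ)+1) ^ (-σ-3)) := by
    have := (summable_nat_add_iff 1).2 hsum0
    exact this.congr (fun j => by push_cast; ring_nf)
  have hsum : Summable (fun j : ℕ => (1+M)*((M+1)*(M+2)*(M+3)) * ((j:ℝ)+1) ^ (-σ-3)) :=
    hsum1.mul_left _
  have hub := tendstoUniformlyOn_tsum hsum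
    (f := fun j z => (1-z) * tau z (j+1)) (s := K)
    (fun j z hz => tau_bound (by linarith) (hz₀min hz) (hM z hz) j)
  have hidx : Filter.Tendsto (fun r : ℕ => Finset.range (r-1)) atTop atTop := by
    apply Filter.tendsto_finset_range.comp
    apply Filter.tendsto_atTop.2
    intro b
    filter_upwards [Filter.eventually_ge_atTop (b+1)] with r hr
    omega
  have hcomp : TendstoUniformlyOn (fun r z => ∑ j ∈ Finset.range (r-1), (1-z) * tau z (j+1))
      FF atTop K := fun u hu => hidx.eventually (hub u hu)
  apply hcomp.congr
  filter_upwards [Filter.eventually_ge_atTop 1] with r hr z _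
  have : gt' ((r-1)+1) z = (1-z) * ∑ j ∈ Finset.range (r-1), tau z (j+1) := EM z (r-1)
  rw [Nat.sub_add_cancel hr] at this
  rw [this, Finset.mul_sum]

lemma gt'_differentiable {r : ℕ} (hr : 1 ≤ r) : Differentiable ℂ (gt' r) := by
  have hr0 : ((r:ℕ):ℂ) ≠ 0 := Nat.cast_ne_zero.mpr (by omega)
  have hd1 : Differentiable ℂ (fun z : ℂ => (1:ℂ)-z) := (differentiable_const _).sub differentiable_id
  have hsum : Differentiable ℂ (fun z : ℂ => ∑ k ∈ Finset.Icc 1 r, (k:ℂ) ^ (-z)) := by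
    apply Differentiable.fun_sum
    intro k hk
    have hk1 : 1 ≤ k := (Finset.mem_Icc.mp hk).1
    have hk0 : ((k:ℕ):ℂ) ≠ 0 := Nat.cast_ne_zero.mpr (by omega)
    exact fun z => (differentiableAt_id.neg).const_cpow (Or.inl hk0)
  have hp1 : Differentiable ℂ (fun z : ℂ => (r:ℂ) ^ (-z)) :=
    fun z => (differentiableAt_id.neg).const_cpow (Or.inl hr0)
  have hp2 : Differentiable ℂ (fun z : ℂ => (r:ℂ) ^ (1-z)) :=
    fun z => ((differentiableAt_const _).sub differentiableAt_id).const_cpow (Or.inl hr0)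
  have hp3 : Differentiable ℂ (fun z : ℂ => (r:ℂ) ^ (-z-1)) :=
    fun z => ((differentiableAt_id.neg).sub_const _).const_cpow (Or.inl hr0)
  unfold gt'
  exact (((hd1.mul hsum).sub (((hd1.mul ((differentiable_const _).add hp1))).div_const 2)).sub
    (hp2.sub_const 1)).sub ((hd1.mul ((differentiable_id.neg).div_const 12)).mul (hp3.sub_const 1))

lemma FF_differentiableOn : DifferentiableOn ℂ FF Wset := by
  apply tlu.differentiableOn ?_ isOpen_Wset
  filter_upwards [Filter.eventually_ge_atTop 1] with r hr
  exact (gt'_differentiable hr).differentiableOn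

lemma cpow_nat_tendsto_zero {w : ℂ} (hw : w.re < 0) :
    Filter.Tendsto (fun r : ℕ => ((r:ℕ):ℂ) ^ w) atTop (nhds 0) := by
  apply squeeze_zero_norm' (a := fun r : ℕ => (r:ℝ) ^ w.re)
  · filter_upwards [Filter.eventually_ge_atTop 1] with r hr
    have hrpos : (0:ℝ) < (r:ℝ) := by exact_mod_cast Nat.pos_of_ne_zero (by omega)
    rw [show ((r:ℕ):ℂ) = (((r:ℝ)):ℂ) from rfl,
      Complex.norm_cpow_eq_rpow_re_of_pos hrpos]
  · have := (tendsto_rpow_neg_atTop (by linarith : (0:ℝ) < -w.re)).comp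
      (tendsto_natCast_atTop_atTop (R := ℝ))
    simpa [Function.comp_def] using this

lemma gt'_tendsto {z : ℂ} (hz : 1 < z.re) :
    Filter.Tendsto (fun r : ℕ => gt' r z) atTop
      (nhds ((1-z) * riemannZeta z - (1-z)/2 + 1 - (1-z)*(z/12))) := by
  have hS : Filter.Tendsto (fun r : ℕ => ∑ k ∈ Finset.Icc 1 r, (k:ℂ) ^ (-z)) atTop
      (nhds (riemannZeta z)) := by
    have hsummable : Summable (fun n : ℕ => 1/((n:ℂ)+1) ^ z) := by
      have := (summable_nat_add_iff 1).2 (Complex.summable_one_div_nat_cpow.mpr hz)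
      exact this.congr (fun n => by push_cast; ring_nf)
    have hts := hsummable.hasSum.tendsto_sum_nat
    rw [← zeta_eq_tsum_one_div_nat_add_one_cpow hz] at hts
    apply hts.congr
    intro r
    rw [← Finset.Ico_add_one_right_eq_Icc 1 r, Finset.sum_Ico_eq_sum_range]
    apply Finset.sum_congr (by norm_num)
    intro i _
    rw [Complex.cpow_neg]
    push_cast
    rw [add_comm 1 (i:ℂ), one_div]
  have h1 := cpow_nat_tendsto_zero (w := -z) (by simpa using by linarith)
  have h2 := cpow_nat_tendsto_zero (w := 1-z) (by simp [Complex.sub_re]; linarith)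
  have h3 := cpow_nat_tendsto_zero (w := -z-1) (by simp [Complex.sub_re]; linarith)
  have big := (((hS.const_mul (1-z)).sub
      (((h1.const_add 1).const_mul (1-z)).div_const 2)).sub
      (h2.sub_const 1)).sub ((h3.sub_const 1).const_mul ((1-z)*(-z/12)))
  have : Filter.Tendsto (fun r : ℕ => gt' r z) atTop
      (nhds ((1-z) * riemannZeta z - (1-z)*(1+0)/2 - (0-1) - (1-z)*(-z/12)*(0-1))) := by
    apply big.congr
    intro r
    simp only [gt']
  have hval : ((1-z) * riemannZeta z - (1-z)*(1+0)/2 - (0-1) - (1-z)*(-z/12)*(0-1))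
      = ((1-z) * riemannZeta z - (1-z)/2 + 1 - (1-z)*(z/12)) := by ring
  rw [hval] at this
  exact this

def ZZ : ℂ → ℂ :=
  Function.update (fun z => (1-z) * riemannZeta z - (1-z)/2 + 1 - (1-z)*(z/12)) 1 0

lemma ZZ_eq {z : ℂ} (hz : z ≠ 1) :
    ZZ z = (1-z) * riemannZeta z - (1-z)/2 + 1 - (1-z)*(z/12) := by
  rw [ZZ, Function.update_of_ne hz]

lemma ZZ_differentiable : Differentiable ℂ ZZ := by
  rw [← differentiableOn_univ]
  rw [← Complex.differentiableOn_compl_singleton_and_continuousAt_iff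
    (c := 1) (Filter.univ_mem)]
  constructor
  · intro z hz
    have hz1 : z ≠ 1 := by
      intro h
      exact hz.2 (by simp [h])
    have hgd : DifferentiableAt ℂ
        (fun z : ℂ => (1-z) * riemannZeta z - (1-z)/2 + 1 - (1-z)*(z/12)) z := by
      have hd1 : DifferentiableAt ℂ (fun z : ℂ => (1:ℂ)-z) z :=
        (differentiableAt_const _).sub differentiableAt_id
      exact (((hd1.mul (differentiableAt_riemannZeta hz1)).sub (hd1.div_const 2)).add_const 1).sub
        (hd1.mul (differentiableAt_id.div_const 12))
    apply DifferentiableAt.differentiableWithinAt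
    apply hgd.congr_of_eventuallyEq
    filter_upwards [IsOpen.mem_nhds isOpen_compl_singleton hz1] with w hw
    exact ZZ_eq hw
  · rw [ZZ, continuousAt_update_same]
    have hres := riemannZeta_residue_one
    have hrest : Filter.Tendsto (fun s : ℂ => -(1-s)/2 + 1 - (1-s)*(s/12))
        (nhdsWithin 1 {1}ᶜ) (nhds (-(1-1)/2 + 1 - (1-1)*(1/12))) := by
      apply Filter.Tendsto.mono_left _ nhdsWithin_le_nhds
      apply Continuous.tendsto
      fun_prop
    have hcomb := (hres.neg).add hrest
    have : Filter.Tendsto (fun s : ℂ => (1-s) * riemannZeta s - (1-s)/2 + 1 - (1-s)*(s/12))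
        (nhdsWithin 1 {1}ᶜ) (nhds (-1 + (-(1-1)/2 + 1 - (1-1)*(1/12)))) := by
      apply hcomb.congr
      intro s
      ring
    convert this using 2
    norm_num

lemma FF_eq_ZZ : Set.EqOn FF ZZ Wset := by
  apply AnalyticOnNhd.eqOn_of_preconnected_of_eventuallyEq
    (FF_differentiableOn.analyticOnNhd isOpen_Wset)
    ((ZZ_differentiable.differentiableOn).analyticOnNhd isOpen_Wset)
    ((convex_halfSpace_re_gt (-2)).isPreconnected)
    (z₀ := (2:ℂ)) (by norm_num [Wset])
  have hopen : IsOpen {z : ℂ | 1 < z.re} := isOpen_lt continuous_const Complex.continuous_re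
  filter_upwards [hopen.mem_nhds (by norm_num)] with z hz
  have hz1 : z ≠ 1 := by
    intro h
    rw [h] at hz
    norm_num at hz
  have hzW : z ∈ Wset := by
    simp only [Wset, Set.mem_setOf_eq]
    have : (1:ℝ) < z.re := hz
    linarith
  have := tendsto_nhds_unique (tlu.tendsto_at hzW) (gt'_tendsto hz)
  rw [this, ZZ_eq hz1]

lemma FF_value {z : ℂ} (hzW : z ∈ Wset) (hz1 : z ≠ 1) :
    FF z = (1-z) * riemannZeta z - (1-z)/2 + 1 - (1-z)*(z/12) := by
  rw [FF_eq_ZZ hzW, ZZ_eq hz1]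

/-- real Peano-kernel integral -/
def Dr (s : ℝ) (r : ℕ) : ℝ :=
  ∫ t in (0:ℝ)..1, (t^3/6 - t/4 + 1/12) * (s*(s-1)*((r:ℝ)+t)^(s-2))

lemma hasDerivAt_rpow_shift (c : ℝ) (p : ℝ) {t : ℝ} (h : 0 < c + t) :
    HasDerivAt (fun t : ℝ => (c + t) ^ p) (p * (c + t) ^ (p-1)) t := by
  have hf : HasDerivAt (fun x : ℝ => c + x) 1 t := by
    simpa using (hasDerivAt_id t).const_add c
  have := hf.rpow_const (p := p) (Or.inl (ne_of_gt h))
  simpa using this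

lemma Dr_eq {s : ℝ} (r : ℕ) (hr : 1 ≤ r) (hs0 : 0 < s) :
    Dr s r = -(1/4)*((r:ℝ)+1)^s - (1/4)*(r:ℝ)^s - (s/12)*(r:ℝ)^(s-1)
      + ((r:ℝ)+1)^(s+1)/(s+1) + ((r:ℝ)^(s+2) - ((r:ℝ)+1)^(s+2))/((s+1)*(s+2)) := by
  have hs1 : s + 1 ≠ 0 := by linarith
  have hs2 : s + 2 ≠ 0 := by linarith
  have hrpos : (0:ℝ) < (r:ℝ) := by exact_mod_cast Nat.pos_of_ne_zero (by omega)
  set V : ℝ → ℝ := fun t => (t^3/6 - t/4 + 1/12) * (s*((r:ℝ)+t)^(s-1))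
      - (t^2/2 - 1/4) * ((r:ℝ)+t)^s
      + (t*((r:ℝ)+t)^(s+1)/(s+1) - ((r:ℝ)+t)^(s+2)/((s+1)*(s+2))) with hV
  have hpos : ∀ t ∈ Set.uIcc (0:ℝ) 1, 0 < (r:ℝ) + t := by
    intro t ht
    rw [Set.uIcc_of_le (by norm_num : (0:ℝ) ≤ 1)] at ht
    linarith [ht.1]
  have hderiv : ∀ t ∈ Set.uIcc (0:ℝ) 1,
      HasDerivAt V ((t^3/6 - t/4 + 1/12) * (s*(s-1)*((r:ℝ)+t)^(s-2))) t := by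
    intro t ht
    have hp := hpos t ht
    have e1 : HasDerivAt (fun t : ℝ => ((r:ℝ)+t) ^ (s-1)) ((s-1) * ((r:ℝ)+t)^(s-2)) t := by
      simpa only [show s-1-1 = s-2 from by ring] using hasDerivAt_rpow_shift (r:ℝ) (s-1) hp
    have e2 : HasDerivAt (fun t : ℝ => ((r:ℝ)+t) ^ s) (s * ((r:ℝ)+t)^(s-1)) t :=
      hasDerivAt_rpow_shift (r:ℝ) s hp
    have e3 : HasDerivAt (fun t : ℝ => ((r:ℝ)+t) ^ (s+1)) ((s+1) * ((r:ℝ)+t)^s) t := by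
      simpa only [show s+1-1 = s from by ring] using hasDerivAt_rpow_shift (r:ℝ) (s+1) hp
    have e4 : HasDerivAt (fun t : ℝ => ((r:ℝ)+t) ^ (s+2)) ((s+2) * ((r:ℝ)+t)^(s+1)) t := by
      simpa only [show s+2-1 = s+1 from by ring] using hasDerivAt_rpow_shift (r:ℝ) (s+2) hp
    have k1 : HasDerivAt (fun t : ℝ => t^3/6 - t/4 + 1/12) (t^2/2 - 1/4) t := by
      have := (((hasDerivAt_pow 3 t).div_const 6).sub ((hasDerivAt_id t).div_const 4)).add_const
        (1/12 : ℝ)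
      convert this using 1
      all_goals first | rfl | ring
    have k2 : HasDerivAt (fun u : ℝ => u^2/2 - 1/4) t t := by
      have := ((hasDerivAt_pow 2 t).div_const 2).sub_const (1/4 : ℝ)
      convert this using 1
      all_goals first | rfl | (push_cast; ring)
    have hT1 := k1.mul (e1.const_mul s)
    have hT2 := k2.mul e2
    have hT3 := (((hasDerivAt_id t).mul e3).div_const (s+1)).sub (e4.div_const ((s+1)*(s+2)))
    have := (hT1.sub hT2).add hT3
    convert this using 1
    all_goals first | rfl | (simp only [id]; field_simp; ring)
  have hint : IntervalIntegrable (fun t => (t^3/6 - t/4 + 1/12) * (s*(s-1)*((r:ℝ)+t)^(s-2)))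
      MeasureTheory.volume 0 1 := by
    apply ContinuousOn.intervalIntegrable
    apply ContinuousOn.mul (by fun_prop)
    apply ContinuousOn.mul continuousOn_const
    intro t ht
    exact (((continuous_const.add continuous_id).continuousAt).rpow_const
      (Or.inl (ne_of_gt (hpos t ht)))).continuousWithinAt
  have key := intervalIntegral.integral_eq_sub_of_hasDerivAt hderiv hint
  rw [Dr, key, hV]
  norm_num
  field_simp
  ring

lemma Dr_tendsto {s : ℝ} (hs1 : 1 < s) (hs2 : s < 2) :
    Filter.Tendsto (fun r : ℕ => Dr s r) atTop (nhds 0) := by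
  apply squeeze_zero_norm' (a := fun r : ℕ => s*(s-1) * (r:ℝ)^(s-2))
  · filter_upwards [Filter.eventually_ge_atTop 1] with r hr
    have hrpos : (0:ℝ) < (r:ℝ) := by exact_mod_cast Nat.pos_of_ne_zero (by omega)
    have hb : ‖Dr s r‖ ≤ (s*(s-1) * (r:ℝ)^(s-2)) * |1 - 0| := by
      apply intervalIntegral.norm_integral_le_of_norm_le_const
      intro t ht
      rw [Set.uIoc_of_le (by norm_num : (0:ℝ) ≤ 1)] at ht
      have ht0 : 0 < t := ht.1
      have ht1 : t ≤ 1 := ht.2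
      have hK : |t^3/6 - t/4 + 1/12| ≤ 1 := by
        have h3a : t^3 ≤ 1 := by nlinarith [pow_le_one₀ ht0.le ht1 (n := 3)]
        have h3b : 0 ≤ t^3 := by positivity
        rw [abs_le]
        constructor <;> nlinarith
      have hrp : ((r:ℝ)+t)^(s-2) ≤ (r:ℝ)^(s-2) :=
        Real.rpow_le_rpow_of_nonpos hrpos (by linarith) (by linarith)
      have hrpn : (0:ℝ) ≤ ((r:ℝ)+t)^(s-2) := Real.rpow_nonneg (by linarith) _
      have hss : (0:ℝ) ≤ s*(s-1) := by nlinarith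
      rw [Real.norm_eq_abs, abs_mul]
      have habs2 : |s*(s-1)*((r:ℝ)+t)^(s-2)| = s*(s-1)*((r:ℝ)+t)^(s-2) :=
        _root_.abs_of_nonneg (mul_nonneg hss hrpn)
      rw [habs2]
      calc |t^3/6 - t/4 + 1/12| * (s*(s-1)*((r:ℝ)+t)^(s-2))
          ≤ 1 * (s*(s-1)*((r:ℝ)^(s-2))) := by
            apply mul_le_mul hK ?_ (mul_nonneg hss hrpn) (by norm_num)
            exact mul_le_mul_of_nonneg_left hrp hss
        _ = s*(s-1)*(r:ℝ)^(s-2) := by ring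
    simpa using hb
  · have h0 : Filter.Tendsto (fun x : ℝ => x ^ (-(2-s))) atTop (nhds 0) :=
      tendsto_rpow_neg_atTop (by linarith)
    have := (h0.comp (tendsto_natCast_atTop_atTop (R := ℝ))).const_mul (s*(s-1))
    simpa [Function.comp, show -(2-s) = s-2 from by ring] using this

end Stmt15

set_option maxHeartbeats 1000000 in
open Stmt15 in
/-- The diagonal constants `C₀(r)` converge to `−ζ(−2H)`. -/
theorem stmt_15 (H : ℝ) (hH : H ∈ Set.Ioo (1/2 : ℝ) 1) :
    Tendsto (fun r : ℕ =>
        ((-(1/4) * ((r:ℝ) + 1) ^ (2*H) + (1/4) * (r:ℝ) ^ (2*H)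
          - (∑ k ∈ Finset.Icc 1 r, (k:ℝ) ^ (2*H))
          + (((r:ℝ) + 1) ^ (2*H + 1) + (r:ℝ) ^ (2*H + 1)) / (2*H + 1)
          + ((r:ℝ) ^ (2*H + 2) - ((r:ℝ) + 1) ^ (2*H + 2)) / ((2*H + 1) * (2*H + 2)) : ℝ)
            : ℂ))
      atTop (nhds (-riemannZeta ((-(2*H) : ℝ) : ℂ))) := by
  obtain ⟨hH1, hH2⟩ := hH
  set z₀ : ℂ := ((-(2*H) : ℝ) : ℂ) with hz₀def
  have hz0 : z₀ = -(2*(H:ℂ)) := by rw [hz₀def]; push_cast; ring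
  have hz1 : -z₀ = 2*(H:ℂ) := by rw [hz0]; ring
  have hz2 : (1:ℂ)-z₀ = 2*(H:ℂ)+1 := by rw [hz0]; ring
  have hz3 : -z₀-1 = 2*(H:ℂ)-1 := by rw [hz0]; ring
  have hne1 : 2*(H:ℂ)+1 ≠ 0 := by
    have h : ((2*H+1:ℝ):ℂ) ≠ 0 := Complex.ofReal_ne_zero.mpr (by linarith)
    push_cast at h
    exact h
  have hne2 : 2*(H:ℂ)+2 ≠ 0 := by
    have h : ((2*H+2:ℝ):ℂ) ≠ 0 := Complex.ofReal_ne_zero.mpr (by linarith)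
    push_cast at h
    exact h
  have h1z : (1:ℂ) - z₀ ≠ 0 := by rw [hz2]; exact hne1
  have hz₀W : z₀ ∈ Wset := by
    simp only [Wset, Set.mem_setOf_eq, hz₀def, Complex.ofReal_re]
    linarith
  have hz₀1 : z₀ ≠ 1 := by
    intro h
    have := congrArg Complex.re h
    simp only [hz₀def, Complex.ofReal_re, Complex.one_re] at this
    linarith
  have hkey : ∀ r : ℕ, 1 ≤ r →
      ((-(1/4) * ((r:ℝ) + 1) ^ (2*H) + (1/4) * (r:ℝ) ^ (2*H)
          - (∑ k ∈ Finset.Icc 1 r, (k:ℝ) ^ (2*H))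
          + (((r:ℝ) + 1) ^ (2*H + 1) + (r:ℝ) ^ (2*H + 1)) / (2*H + 1)
          + ((r:ℝ) ^ (2*H + 2) - ((r:ℝ) + 1) ^ (2*H + 2)) / ((2*H + 1) * (2*H + 2)) : ℝ) : ℂ)
      = -(gt' r z₀)/(1-z₀) + ((Dr (2*H) r : ℝ) : ℂ) + (1/(1-z₀) - 1/2 - z₀/12) := by
    intro r hr
    have h0r : (0:ℝ) ≤ (r:ℝ) := Nat.cast_nonneg r
    have h1r : (0:ℝ) ≤ (r:ℝ)+1 := by linarith
    have hsum : (∑ k ∈ Finset.Icc 1 r, (((k:ℝ)^(2*H) : ℝ) : ℂ))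
        = ∑ k ∈ Finset.Icc 1 r, (k:ℂ)^(2*(H:ℂ)) := by
      apply Finset.sum_congr rfl
      intro k _
      rw [Complex.ofReal_cpow (Nat.cast_nonneg k)]
      push_cast
      ring_nf
    have hgt_div : -(gt' r z₀)/(1-z₀)
        = -(∑ k ∈ Finset.Icc 1 r, (k:ℂ)^(2*(H:ℂ)))
          + (1+(r:ℂ)^(2*(H:ℂ)))/2 + ((r:ℂ)^(2*(H:ℂ)+1)-1)/(2*(H:ℂ)+1)
          + ((H:ℂ)/6)*((r:ℂ)^(2*(H:ℂ)-1)-1) := by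
      simp only [gt']
      rw [hz3, hz2, hz1]
      field_simp [hne1]
      ring
    rw [Dr_eq r hr (by linarith : (0:ℝ) < 2*H), hgt_div, hz2, hz0]
    push_cast
    rw [hsum]
    simp only [Complex.ofReal_cpow h0r, Complex.ofReal_cpow h1r]
    push_cast
    ring
  have hgt : Tendsto (fun r : ℕ => gt' r z₀) atTop (nhds (FF z₀)) := tlu.tendsto_at hz₀W
  have hD : Tendsto (fun r : ℕ => Dr (2*H) r) atTop (nhds 0) :=
    Dr_tendsto (by linarith) (by linarith)
  have hDC : Tendsto (fun r : ℕ => ((Dr (2*H) r : ℝ) : ℂ)) atTop (nhds 0) := by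
    have := (Complex.continuous_ofReal.tendsto 0).comp hD
    simpa [Function.comp_def] using this
  have hlim : Tendsto (fun r : ℕ =>
        -(gt' r z₀)/(1-z₀) + ((Dr (2*H) r : ℝ) : ℂ) + (1/(1-z₀) - 1/2 - z₀/12)) atTop
      (nhds (-(FF z₀)/(1-z₀) + 0 + (1/(1-z₀) - 1/2 - z₀/12))) :=
    ((hgt.neg.div_const (1-z₀)).add hDC).add_const _
  have hval : -(FF z₀)/(1-z₀) + 0 + (1/(1-z₀) - 1/2 - z₀/12) = -riemannZeta z₀ := by
    rw [FF_value hz₀W hz₀1]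
    field_simp
    ring
  rw [hval] at hlim
  apply Filter.Tendsto.congr' ?_ hlim
  filter_upwards [Filter.eventually_ge_atTop 1] with r hr
  exact (hkey r hr).symm
end
end
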